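/- Let Δ ⊂ ℝⁿ be a compact convex polytope with 0 in its interior and boundary measure dσ satisfying |∂Δ|_{dσ} = n|Δ|. For every convex function g on Δ (integrable with respect to dy and dσ), one has -g(0) + (1/|Δ|)∫_Δ g dy ≤ (1/|Δ|)(∫_{∂Δ} g dσ - n ∫_Δ g dy), with equality if and only if g is radially affine, i.e. g(tz) = (1-t)g(0) + t g(z) for all t ∈ [0,1], z ∈ ∂Δ. -/

import Mathlib

open MeasureTheory

private lemma subset_closure_interior_of_convex' {E : Type*} [NormedAddCommGroup E]
    [NormedSpace ℝ E] {s : Set E} (hconv : Convex ℝ s) (h0 : (0 : E) ∈ interior s) :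
    s ⊆ closure (interior s) := by
  intro x hx
  have htend : Filter.Tendsto (fun t : ℝ => t • x) (nhdsWithin 1 (Set.Iio 1)) (nhds x) := by
    have h1 : Filter.Tendsto (fun t : ℝ => t • x) (nhds 1) (nhds ((1 : ℝ) • x)) :=
      (continuous_id.smul continuous_const).tendsto 1
    simpa using h1.mono_left nhdsWithin_le_nhds
  refine mem_closure_of_tendsto htend ?_
  filter_upwards [Ioo_mem_nhdsLT one_pos] with t ht
  have h2 := hconv.combo_interior_self_mem_interior h0 hx
    (by linarith [ht.2] : (0 : ℝ) < 1 - t) ht.1.le (by ring)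
  simpa using h2

private lemma eq_zero_of_nonneg_of_integral_zero {n : ℕ} {s : Set (Fin n → ℝ)}
    (hs : IsCompact s) (hsub : s ⊆ closure (interior s))
    {f : (Fin n → ℝ) → ℝ} (hf : ContinuousOn f s) (hf0 : ∀ x ∈ s, 0 ≤ f x)
    (hI : ∫ x in s, f x = 0) : ∀ x ∈ s, f x = 0 := by
  have hmeas : MeasurableSet s := hs.isClosed.measurableSet
  have hfi : IntegrableOn f s := hf.integrableOn_compact hs
  have hae : f =ᵐ[volume.restrict s] 0 := by
    refine (setIntegral_eq_zero_iff_of_nonneg_ae ?_ hfi).1 hI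
    exact (ae_restrict_iff' hmeas).2 (Filter.Eventually.of_forall hf0)
  have hzero : volume.restrict s {x | f x ≠ 0} = 0 := by
    simpa [Filter.EventuallyEq, MeasureTheory.ae_iff] using hae
  by_contra hcon
  push_neg at hcon
  obtain ⟨x, hxs, hfx⟩ := hcon
  have hfxpos : 0 < f x := lt_of_le_of_ne (hf0 x hxs) (Ne.symm hfx)
  have hnb : (nhdsWithin x (interior s)).NeBot :=
    mem_closure_iff_nhdsWithin_neBot.1 (hsub hxs)
  have hev : ∀ᶠ y in nhdsWithin x s, f x / 2 < f y :=
    (hf x hxs).eventually (eventually_gt_nhds (by linarith))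
  have hev2 : ∀ᶠ y in nhdsWithin x (interior s), f x / 2 < f y ∧ y ∈ interior s :=
    (hev.filter_mono (nhdsWithin_mono x interior_subset)).and self_mem_nhdsWithin
  obtain ⟨y, hy1, hy2⟩ := hev2.exists
  have hca : ContinuousAt f y := hf.continuousAt (mem_interior_iff_mem_nhds.1 hy2)
  have hev3 : ∀ᶠ w in nhds y, f x / 2 < f w := hca.eventually (eventually_gt_nhds hy1)
  obtain ⟨U, hUsub, hUopen, hyU⟩ := eventually_nhds_iff.1 hev3
  have hWopen : IsOpen (U ∩ interior s) := hUopen.inter isOpen_interior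
  have hWne : (U ∩ interior s).Nonempty := ⟨y, hyU, hy2⟩
  have hWpos : 0 < volume (U ∩ interior s) := hWopen.measure_pos volume hWne
  have hWsub : U ∩ interior s ⊆ {x | f x ≠ 0} := fun w hw =>
    (lt_trans (half_pos hfxpos) (hUsub w hw.1)).ne'
  have hle : volume.restrict s (U ∩ interior s) ≤ 0 :=
    hzero ▸ measure_mono hWsub
  rw [Measure.restrict_apply hWopen.measurableSet,
    Set.inter_eq_left.2 ((Set.inter_subset_right).trans interior_subset)] at hle
  exact absurd (le_antisymm hle zero_le) hWpos.ne'

/-- Ding invariant versus Donaldson–Futaki invariant on a toric polytope: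
`-g(0) + (1/|Δ|)∫_Δ g ≤ (1/|Δ|)(∫_{∂Δ} g dσ - n∫_Δ g)` for every convex `g`,
with equality iff `g` is radially affine. -/
theorem ding_le_donaldson_futaki {n : ℕ} (Δ : Set (Fin n → ℝ))
    (hΔc : IsCompact Δ) (hΔconv : Convex ℝ Δ) (h0 : (0 : Fin n → ℝ) ∈ interior Δ)
    (σ : Measure (Fin n → ℝ)) (hσfin : IsFiniteMeasure σ)
    (hpull : ∀ F : (Fin n → ℝ) → ℝ, ContinuousOn F (closure Δ) →
      ∫ y in Δ, F y =
        ∫ z in frontier Δ, (∫ t in Set.Ioc (0 : ℝ) 1, t ^ (n - 1) * F (t • z)) ∂σ)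
    (hnorm : (σ (frontier Δ)).toReal = n * (volume Δ).toReal)
    (g : (Fin n → ℝ) → ℝ) (hgconv : ConvexOn ℝ Δ g)
    (hgcont : ContinuousOn g (closure Δ)) :
    (-g 0 + (volume Δ).toReal⁻¹ * ∫ y in Δ, g y ≤
      (volume Δ).toReal⁻¹ *
        ((∫ z in frontier Δ, g z ∂σ) - n * ∫ y in Δ, g y)) ∧
    ((-g 0 + (volume Δ).toReal⁻¹ * ∫ y in Δ, g y =
      (volume Δ).toReal⁻¹ *
        ((∫ z in frontier Δ, g z ∂σ) - n * ∫ y in Δ, g y)) ↔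
      ∀ z ∈ frontier Δ, ∀ t ∈ Set.Icc (0 : ℝ) 1,
        g (t • z) = (1 - t) * g 0 + t * g z) := by
  classical
  have hclos : closure Δ = Δ := hΔc.isClosed.closure_eq
  have hΔnhds : Δ ∈ nhds (0 : Fin n → ℝ) := mem_interior_iff_mem_nhds.1 h0
  have h0Δ : (0 : Fin n → ℝ) ∈ Δ := interior_subset h0
  have hmeasΔ : MeasurableSet Δ := hΔc.isClosed.measurableSet
  have habs : Absorbent ℝ Δ := absorbent_nhds_zero hΔnhds
  have hbdd : Bornology.IsVonNBounded ℝ Δ :=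
    (NormedSpace.isVonNBounded_iff ℝ).2 hΔc.isBounded
  have hgcontΔ : ContinuousOn g Δ := hgcont.mono subset_closure
  have hVpos0 : 0 < volume Δ := Measure.measure_pos_of_nonempty_interior _ ⟨0, h0⟩
  have hVlt : volume Δ < ⊤ := hΔc.measure_lt_top
  have hVpos : 0 < (volume Δ).toReal := ENNReal.toReal_pos hVpos0.ne' hVlt.ne
  rcases Nat.eq_zero_or_pos n with hn0 | hn
  · exfalso
    subst hn0
    have hσ0 : σ (frontier Δ) = 0 := by
      have h1 : (σ (frontier Δ)).toReal = 0 := by rw [hnorm]; simp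
      exact ((ENNReal.toReal_eq_zero_iff _).1 h1).resolve_right (measure_ne_top σ _)
    have h1 := hpull (fun _ => 1) continuousOn_const
    rw [Measure.restrict_eq_zero.2 hσ0] at h1
    simp only [integral_zero_measure, setIntegral_const, smul_eq_mul, mul_one] at h1
    exact hVpos.ne' h1
  obtain ⟨m, rfl⟩ : ∃ m, n = m + 1 := ⟨n - 1, (Nat.succ_pred_eq_of_pos hn).symm⟩
  set V : ℝ := (volume Δ).toReal with hV
  set S : ℝ := ∫ z in frontier Δ, g z ∂σ with hS
  set I : ℝ := ∫ y in Δ, g y with hI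
  -- gauge facts
  have hfr1 : ∀ z ∈ frontier Δ, gauge Δ z = 1 := fun z hz =>
    (gauge_eq_one_iff_mem_frontier hΔconv hΔnhds).2 hz
  have hfrΔ : frontier Δ ⊆ Δ := hΔc.isClosed.frontier_subset
  have hρpos : ∀ y : Fin (m + 1) → ℝ, y ≠ 0 → 0 < gauge Δ y := fun y hy =>
    (gauge_pos habs hbdd).2 hy
  have hρle : ∀ y ∈ Δ, gauge Δ y ≤ 1 := fun y hy => gauge_le_one_of_mem hy
  have hρcont : Continuous (gauge Δ) := continuous_gauge hΔconv hΔnhds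
  have hρsmul : ∀ (t : ℝ), 0 ≤ t → ∀ y : Fin (m + 1) → ℝ,
      gauge Δ (t • y) = t * gauge Δ y := fun t ht y => by
    rw [gauge_smul_of_nonneg ht, smul_eq_mul]
  set ζ : (Fin (m + 1) → ℝ) → (Fin (m + 1) → ℝ) := fun y => (gauge Δ y)⁻¹ • y with hζ
  have hζfr : ∀ y : Fin (m + 1) → ℝ, y ≠ 0 → ζ y ∈ frontier Δ := by
    intro y hy
    have hpos := hρpos y hy
    have h1 : gauge Δ (ζ y) = 1 := by
      rw [hζ]; simp only
      rw [hρsmul _ (inv_nonneg.2 hpos.le)]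
      field_simp
    exact (gauge_eq_one_iff_mem_frontier hΔconv hΔnhds).1 h1
  have hζΔ : ∀ y ∈ Δ, ζ y ∈ Δ := by
    intro y hy
    by_cases hy0 : y = 0
    · simpa [hζ, hy0] using h0Δ
    · exact hfrΔ (hζfr y hy0)
  have hrepr : ∀ y : Fin (m + 1) → ℝ, y ≠ 0 → gauge Δ y • ζ y = y := by
    intro y hy
    rw [hζ]; simp only
    rw [smul_smul, mul_inv_cancel₀ (hρpos y hy).ne', one_smul]
  set h : (Fin (m + 1) → ℝ) → ℝ := fun y => g 0 + gauge Δ y * (g (ζ y) - g 0) with hh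
  have hkey : ∀ z ∈ frontier Δ, ∀ t : ℝ, 0 < t → t ≤ 1 →
      h (t • z) = (1 - t) * g 0 + t * g z := by
    intro z hz t ht0 _
    have hρtz : gauge Δ (t • z) = t := by rw [hρsmul t ht0.le, hfr1 z hz, mul_one]
    have hζtz : ζ (t • z) = z := by
      rw [hζ]; simp only [hρtz]
      rw [smul_smul, inv_mul_cancel₀ ht0.ne', one_smul]
    rw [hh]; simp only [hρtz, hζtz]; ring
  have hgh : ∀ y ∈ Δ, g y ≤ h y := by
    intro y hy
    by_cases hy0 : y = 0
    · subst hy0; simp [hh, gauge_zero]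
    · have h1 := hgconv.2 (hζΔ y hy) h0Δ (hρpos y hy0).le
        (by linarith [hρle y hy] : (0 : ℝ) ≤ 1 - gauge Δ y) (by ring)
      have h2 : gauge Δ y • ζ y + (1 - gauge Δ y) • (0 : Fin (m + 1) → ℝ) = y := by
        rw [smul_zero, add_zero, hrepr y hy0]
      rw [h2] at h1
      calc g y ≤ gauge Δ y * g (ζ y) + (1 - gauge Δ y) * g 0 := by
            simpa [smul_eq_mul] using h1
        _ = h y := by rw [hh]; ring
  have hζmapsto : Set.MapsTo ζ Δ Δ := fun y hy => hζΔ y hy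
  have hcont_h : ContinuousOn h Δ := by
    intro y hy
    by_cases hy0 : y = 0
    · subst hy0
      obtain ⟨C, hC⟩ := hΔc.exists_bound_of_continuousOn hgcontΔ
      have htend : Filter.Tendsto (fun y' => gauge Δ y' * (g (ζ y') - g 0))
          (nhdsWithin 0 Δ) (nhds 0) := by
        apply squeeze_zero_norm' (a := fun y' => gauge Δ y' * (C + ‖g 0‖))
        · filter_upwards [self_mem_nhdsWithin] with y' hy'
          rw [Real.norm_eq_abs, abs_mul, abs_of_nonneg (gauge_nonneg _)]
          refine mul_le_mul_of_nonneg_left ?_ (gauge_nonneg _)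
          calc |g (ζ y') - g 0| ≤ |g (ζ y')| + |g 0| := abs_sub _ _
            _ ≤ C + ‖g 0‖ := by
                have := hC (ζ y') (hζΔ y' hy')
                simp only [Real.norm_eq_abs] at this ⊢
                linarith [le_refl |g 0|]
        · have h1 : Filter.Tendsto (fun y' => gauge Δ y' * (C + ‖g 0‖))
              (nhdsWithin 0 Δ) (nhds (gauge Δ 0 * (C + ‖g 0‖))) :=
            ((hρcont.tendsto 0).mono_left nhdsWithin_le_nhds).mul tendsto_const_nhds
          simpa [gauge_zero] using h1
      have h4 : h 0 = g 0 + 0 := by simp [hh, gauge_zero]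
      show Filter.Tendsto h (nhdsWithin 0 Δ) (nhds (h 0))
      rw [h4]
      exact htend.const_add (g 0)
    · have hρy := hρpos y hy0
      have hζca : ContinuousAt ζ y :=
        (hρcont.continuousAt.inv₀ hρy.ne').smul continuousAt_id
      have hgζ : ContinuousWithinAt (fun y' => g (ζ y')) Δ y :=
        (hgcontΔ (ζ y) (hζΔ y hy)).comp hζca.continuousWithinAt hζmapsto
      exact continuousWithinAt_const.add
        (hρcont.continuousAt.continuousWithinAt.mul (hgζ.sub continuousWithinAt_const))
  -- integrabilities
  have hgi : IntegrableOn g Δ := hgcontΔ.integrableOn_compact hΔc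
  have hhi : IntegrableOn h Δ := hcont_h.integrableOn_compact hΔc
  have hfrc : IsCompact (frontier Δ) := hΔc.of_isClosed_subset isClosed_frontier hfrΔ
  have hfrmeas : MeasurableSet (frontier Δ) := isClosed_frontier.measurableSet
  have hgiσ : IntegrableOn g (frontier Δ) σ := (hgcontΔ.mono hfrΔ).integrableOn_compact hfrc
  -- the inner integral
  have hm1 : ((m : ℝ) + 1) ≠ 0 := by positivity
  have hm2 : ((m : ℝ) + 2) ≠ 0 := by positivity
  have hinner : ∀ z ∈ frontier Δ,
      (∫ t in Set.Ioc (0 : ℝ) 1, t ^ (m + 1 - 1) * h (t • z)) =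
        g 0 * (1 / (m + 1) - 1 / (m + 2)) + (1 / (m + 2)) * g z := by
    intro z hz
    have h1 : ∀ t ∈ Set.Ioc (0 : ℝ) 1,
        t ^ (m + 1 - 1) * h (t • z) = g 0 * t ^ m + (g z - g 0) * t ^ (m + 1) := by
      intro t ht
      rw [hkey z hz t ht.1 ht.2]
      simp only [Nat.add_sub_cancel]
      ring
    rw [setIntegral_congr_fun measurableSet_Ioc h1,
      ← intervalIntegral.integral_of_le (by norm_num : (0 : ℝ) ≤ 1),
      intervalIntegral.integral_add ((intervalIntegral.intervalIntegrable_pow m).const_mul _)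
        ((intervalIntegral.intervalIntegrable_pow (m + 1)).const_mul _),
      intervalIntegral.integral_const_mul, intervalIntegral.integral_const_mul,
      integral_pow, integral_pow]
    push_cast
    field_simp
    ring
  have hhint : ∫ y in Δ, h y =
      (g 0 * (1 / (m + 1) - 1 / (m + 2))) * (σ (frontier Δ)).toReal + (1 / (m + 2)) * S := by
    rw [hpull h (by rw [hclos]; exact hcont_h),
      setIntegral_congr_fun hfrmeas (fun z hz => hinner z hz),
      integral_add (integrableOn_const (s := frontier Δ)
          (C := g 0 * (1 / ((m : ℝ) + 1) - 1 / ((m : ℝ) + 2))) (measure_lt_top σ _).ne enorm_ne_top)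
        (hgiσ.const_mul _),
      setIntegral_const, integral_const_mul, smul_eq_mul, mul_comm, measureReal_def]
  have hIh : ∫ y in Δ, h y = (g 0 * V + S) / (m + 2) := by
    rw [hhint, hnorm]
    push_cast
    field_simp
    ring
  have hle : I ≤ ∫ y in Δ, h y := setIntegral_mono_on hgi hhi hmeasΔ hgh
  have hdiff : ∀ J : ℝ,
      V⁻¹ * (S - ((m : ℝ) + 1) * J) - (-g 0 + V⁻¹ * J) =
        ((m : ℝ) + 2) * V⁻¹ * ((g 0 * V + S) / (m + 2) - J) := by
    intro J
    field_simp
    ring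
  have hcast : ((m + 1 : ℕ) : ℝ) = (m : ℝ) + 1 := by push_cast; ring
  constructor
  · have h1 : 0 ≤ ((m : ℝ) + 2) * V⁻¹ * ((g 0 * V + S) / (m + 2) - I) := by
      refine mul_nonneg (mul_nonneg (by positivity) (inv_nonneg.2 hVpos.le)) ?_
      rw [← hIh]
      linarith
    rw [hcast]
    linarith [hdiff I]
  · rw [hcast]
    constructor
    · intro heq
      have h1 : ((m : ℝ) + 2) * V⁻¹ * ((g 0 * V + S) / (m + 2) - I) = 0 := by
        linarith [hdiff I]
      have hc : ((m : ℝ) + 2) * V⁻¹ ≠ 0 := by positivity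
      have h2 : (g 0 * V + S) / (m + 2) - I = 0 := by
        rcases mul_eq_zero.1 h1 with h3 | h3
        · exact absurd h3 hc
        · exact h3
      have hsubint : ∫ y in Δ, (h y - g y) = 0 := by
        rw [integral_sub hhi hgi, hIh, ← hI]
        linarith
      have hzero : ∀ y ∈ Δ, h y - g y = 0 :=
        eq_zero_of_nonneg_of_integral_zero hΔc
          (subset_closure_interior_of_convex' hΔconv h0)
          (hcont_h.sub hgcontΔ) (fun x hx => sub_nonneg.2 (hgh x hx)) hsubint
      intro z hz t ht
      have hzΔ : z ∈ Δ := hfrΔ hz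
      rcases eq_or_lt_of_le ht.1 with h0t | h0t
      · rw [← h0t]; simp
      · have htzΔ : t • z ∈ Δ := by
          have h3 := hΔconv h0Δ hzΔ (by linarith [ht.2] : (0 : ℝ) ≤ 1 - t) ht.1 (by ring)
          simpa using h3
        have h4 := hzero (t • z) htzΔ
        have h5 : g (t • z) = h (t • z) := by linarith
        rw [h5, hkey z hz t h0t ht.2]
    · intro hcond
      have hgeq : ∀ y ∈ Δ, g y = h y := by
        intro y hy
        by_cases hy0 : y = 0
        · subst hy0; simp [hh, gauge_zero]
        · have hz := hζfr y hy0
          have ht : gauge Δ y ∈ Set.Icc (0 : ℝ) 1 := ⟨gauge_nonneg _, hρle y hy⟩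
          have h1 := hcond (ζ y) hz (gauge Δ y) ht
          rw [hrepr y hy0] at h1
          rw [h1, hh]; ring
      have hIeq : I = ∫ y in Δ, h y := by
        rw [hI]
        exact setIntegral_congr_fun hmeasΔ (fun y hy => hgeq y hy)
      have h2 : (g 0 * V + S) / (m + 2) - I = 0 := by
        rw [hIeq, hIh]; ring
      have h3 := hdiff I
      rw [h2, mul_zero] at h3
      linarith
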